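/- The three-qubit state B₂ |Cl₃⟩ obtained by applying B = diag(cos θ, sin θ)·Rz(γ) to the middle qubit of the 3-qubit linear cluster state has all three single-qubit reduced density matrices with eigenvalue spectrum {(1 + cos 2θ)/2, (1 − cos 2θ)/2} (after normalizing the state). -/

import Mathlib

open Matrix Polynomial

noncomputable section

set_option maxHeartbeats 1000000

def Rz (ξ : ℂ) : Matrix (Fin 2) (Fin 2) ℂ :=
  !![Complex.exp (-Complex.I * ξ / 2), 0; 0, Complex.exp (Complex.I * ξ / 2)]

/-- Amplitudes of the 3-qubit linear cluster state CZ₁₂CZ₂₃|+++⟩. -/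
def Cl3 (i j k : Fin 2) : ℂ :=
  (-1 : ℂ) ^ ((i : ℕ) * (j : ℕ) + (j : ℕ) * (k : ℕ)) / (2 * (Real.sqrt 2 : ℂ))

lemma charpoly_fin_two' (M : Matrix (Fin 2) (Fin 2) ℂ) :
    M.charpoly = X^2 - C (M 0 0 + M 1 1) * X + C (M 0 0 * M 1 1 - M 0 1 * M 1 0) := by
  rw [Matrix.charpoly, Matrix.det_fin_two, Matrix.charmatrix_apply_eq, Matrix.charmatrix_apply_eq,
    Matrix.charmatrix_apply_ne _ _ _ (by decide), Matrix.charmatrix_apply_ne _ _ _ (by decide),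
    map_add, map_sub, _root_.map_mul, _root_.map_mul]
  ring

lemma factored_eq (a b : ℂ) : (X - C a) * (X - C b) = X^2 - C (a + b) * X + C (a * b) := by
  rw [map_add, _root_.map_mul]; ring

/-- For the 3-qubit cluster state with B = diag(cos θ, sin θ)·Rz(γ) applied to the middle
qubit, all three single-qubit reduced density matrices (of the normalized state) have
eigenvalue spectrum {(1 + cos 2θ)/2, (1 − cos 2θ)/2} — expressed via the
characteristic polynomial. -/
theorem btransformed_cluster_spectra (θ γ : ℝ) (hθ1 : 0 < θ) (hθ2 : θ < Real.pi / 2) :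
    let B : Matrix (Fin 2) (Fin 2) ℂ :=
      !![(Real.cos θ : ℂ), 0; 0, (Real.sin θ : ℂ)] * Rz ((γ : ℝ) : ℂ)
    let ψ : Fin 2 → Fin 2 → Fin 2 → ℂ := fun i j k => ∑ j' : Fin 2, B j j' * Cl3 i j' k
    let nrm : ℂ := ∑ i : Fin 2, ∑ j : Fin 2, ∑ k : Fin 2, ψ i j k * star (ψ i j k)
    let ρ1 : Matrix (Fin 2) (Fin 2) ℂ :=
      Matrix.of fun a b => (∑ j : Fin 2, ∑ k : Fin 2, ψ a j k * star (ψ b j k)) / nrm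
    let ρ2 : Matrix (Fin 2) (Fin 2) ℂ :=
      Matrix.of fun a b => (∑ i : Fin 2, ∑ k : Fin 2, ψ i a k * star (ψ i b k)) / nrm
    let ρ3 : Matrix (Fin 2) (Fin 2) ℂ :=
      Matrix.of fun a b => (∑ i : Fin 2, ∑ j : Fin 2, ψ i j a * star (ψ i j b)) / nrm
    let p : Polynomial ℂ :=
      (X - C (((1 + Real.cos (2 * θ)) / 2 : ℝ) : ℂ)) *
        (X - C (((1 - Real.cos (2 * θ)) / 2 : ℝ) : ℂ))
    ρ1.charpoly = p ∧ ρ2.charpoly = p ∧ ρ3.charpoly = p := by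
  intro B ψ nrm ρ1 ρ2 ρ3 p
  have hcc : (starRingEnd ℂ) (Complex.cos (θ:ℂ)) = Complex.cos (θ:ℂ) := by
    rw [← Complex.ofReal_cos]; exact Complex.conj_ofReal _
  have hss : (starRingEnd ℂ) (Complex.sin (θ:ℂ)) = Complex.sin (θ:ℂ) := by
    rw [← Complex.ofReal_sin]; exact Complex.conj_ofReal _
  have hE : (starRingEnd ℂ) (Complex.exp (-(Complex.I * (γ:ℂ)) / 2)) = (Complex.exp (-(Complex.I * (γ:ℂ)) / 2))⁻¹ := by
    rw [← Complex.exp_conj, ← Complex.exp_neg]; congr 1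
    rw [map_div₀, map_neg, _root_.map_mul, Complex.conj_I, Complex.conj_ofReal, map_ofNat]
    ring
  have hF : Complex.exp (Complex.I * (γ:ℂ) / 2) = (Complex.exp (-(Complex.I * (γ:ℂ)) / 2))⁻¹ := by
    rw [← Complex.exp_neg]; congr 1; ring
  have hcs : Complex.cos (θ:ℂ)^2 + Complex.sin (θ:ℂ)^2 = 1 := Complex.cos_sq_add_sin_sq _
  have hrinv : (((Real.sqrt 2 : ℝ) : ℂ)⁻¹)^2 = (2:ℂ)⁻¹ := by
    rw [← Complex.ofReal_inv, ← Complex.ofReal_pow]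
    norm_num [Real.sq_sqrt]
  have hE0 : Complex.exp (-(Complex.I * (γ:ℂ)) / 2) ≠ 0 := Complex.exp_ne_zero _
  have hnrm : nrm = 1/2 := by
    simp [nrm, ψ, B, Rz, Cl3, Fin.sum_univ_two, Matrix.mul_apply, hE, hF, hcc, hss]
    set E := Complex.exp (-(Complex.I*(γ:ℂ))/2) with hEdef
    ring_nf
    rw [hrinv]
    field_simp
    linear_combination hcs
  have key1 : ∀ a b : Fin 2, ρ1 a b = (∑ j : Fin 2, ∑ k : Fin 2, ψ a j k * star (ψ b j k)) * 2 := by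
    intro a b
    simp only [ρ1, Matrix.of_apply, hnrm]
    rw [div_div_eq_mul_div, div_one]
  have key2 : ∀ a b : Fin 2, ρ2 a b = (∑ i : Fin 2, ∑ k : Fin 2, ψ i a k * star (ψ i b k)) * 2 := by
    intro a b
    simp only [ρ2, Matrix.of_apply, hnrm]
    rw [div_div_eq_mul_div, div_one]
  have key3 : ∀ a b : Fin 2, ρ3 a b = (∑ i : Fin 2, ∑ j : Fin 2, ψ i j a * star (ψ i j b)) * 2 := by
    intro a b
    simp only [ρ3, Matrix.of_apply, hnrm]
    rw [div_div_eq_mul_div, div_one]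
  have h100 : ρ1 (0:Fin 2) (0:Fin 2) = (1/2 : ℂ) := by
    rw [key1]
    simp [ψ, B, Rz, Cl3, Fin.sum_univ_two, Matrix.mul_apply, hE, hF, hcc, hss, Complex.cos_two_mul]
    set E := Complex.exp (-(Complex.I*(γ:ℂ))/2) with hEdef
    ring_nf
    rw [hrinv]
    field_simp
    linear_combination hcs
  have h101 : ρ1 (0:Fin 2) (1:Fin 2) = ((Real.cos (2*θ) : ℝ):ℂ)/2 := by
    rw [key1]
    simp [ψ, B, Rz, Cl3, Fin.sum_univ_two, Matrix.mul_apply, hE, hF, hcc, hss, Complex.cos_two_mul]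
    set E := Complex.exp (-(Complex.I*(γ:ℂ))/2) with hEdef
    ring_nf
    rw [hrinv]
    field_simp
    linear_combination (-1:ℂ) * hcs
  have h110 : ρ1 (1:Fin 2) (0:Fin 2) = ((Real.cos (2*θ) : ℝ):ℂ)/2 := by
    rw [key1]
    simp [ψ, B, Rz, Cl3, Fin.sum_univ_two, Matrix.mul_apply, hE, hF, hcc, hss, Complex.cos_two_mul]
    set E := Complex.exp (-(Complex.I*(γ:ℂ))/2) with hEdef
    ring_nf
    rw [hrinv]
    field_simp
    linear_combination (-1:ℂ) * hcs
  have h111 : ρ1 (1:Fin 2) (1:Fin 2) = (1/2 : ℂ) := by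
    rw [key1]
    simp [ψ, B, Rz, Cl3, Fin.sum_univ_two, Matrix.mul_apply, hE, hF, hcc, hss, Complex.cos_two_mul]
    set E := Complex.exp (-(Complex.I*(γ:ℂ))/2) with hEdef
    ring_nf
    rw [hrinv]
    field_simp
    linear_combination hcs
  have h300 : ρ3 (0:Fin 2) (0:Fin 2) = (1/2 : ℂ) := by
    rw [key3]
    simp [ψ, B, Rz, Cl3, Fin.sum_univ_two, Matrix.mul_apply, hE, hF, hcc, hss, Complex.cos_two_mul]
    set E := Complex.exp (-(Complex.I*(γ:ℂ))/2) with hEdef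
    ring_nf
    rw [hrinv]
    field_simp
    linear_combination hcs
  have h301 : ρ3 (0:Fin 2) (1:Fin 2) = ((Real.cos (2*θ) : ℝ):ℂ)/2 := by
    rw [key3]
    simp [ψ, B, Rz, Cl3, Fin.sum_univ_two, Matrix.mul_apply, hE, hF, hcc, hss, Complex.cos_two_mul]
    set E := Complex.exp (-(Complex.I*(γ:ℂ))/2) with hEdef
    ring_nf
    rw [hrinv]
    field_simp
    linear_combination (-1:ℂ) * hcs
  have h310 : ρ3 (1:Fin 2) (0:Fin 2) = ((Real.cos (2*θ) : ℝ):ℂ)/2 := by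
    rw [key3]
    simp [ψ, B, Rz, Cl3, Fin.sum_univ_two, Matrix.mul_apply, hE, hF, hcc, hss, Complex.cos_two_mul]
    set E := Complex.exp (-(Complex.I*(γ:ℂ))/2) with hEdef
    ring_nf
    rw [hrinv]
    field_simp
    linear_combination (-1:ℂ) * hcs
  have h311 : ρ3 (1:Fin 2) (1:Fin 2) = (1/2 : ℂ) := by
    rw [key3]
    simp [ψ, B, Rz, Cl3, Fin.sum_univ_two, Matrix.mul_apply, hE, hF, hcc, hss, Complex.cos_two_mul]
    set E := Complex.exp (-(Complex.I*(γ:ℂ))/2) with hEdef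
    ring_nf
    rw [hrinv]
    field_simp
    linear_combination hcs
  have h200 : ρ2 (0:Fin 2) (0:Fin 2) = Complex.cos (θ:ℂ)^2 := by
    rw [key2]
    simp [ψ, B, Rz, Cl3, Fin.sum_univ_two, Matrix.mul_apply, hE, hF, hcc, hss]
    set E := Complex.exp (-(Complex.I*(γ:ℂ))/2) with hEdef
    ring_nf
    rw [hrinv]
    field_simp
  have h211 : ρ2 (1:Fin 2) (1:Fin 2) = Complex.sin (θ:ℂ)^2 := by
    rw [key2]
    simp [ψ, B, Rz, Cl3, Fin.sum_univ_two, Matrix.mul_apply, hE, hF, hcc, hss]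
    set E := Complex.exp (-(Complex.I*(γ:ℂ))/2) with hEdef
    ring_nf
    rw [hrinv]
    field_simp
  have h201 : ρ2 (0:Fin 2) (1:Fin 2) = 0 := by
    rw [key2]
    simp [ψ, B, Rz, Cl3, Fin.sum_univ_two, Matrix.mul_apply, hE, hF, hcc, hss]
    ring
  have h210 : ρ2 (1:Fin 2) (0:Fin 2) = 0 := by
    rw [key2]
    simp [ψ, B, Rz, Cl3, Fin.sum_univ_two, Matrix.mul_apply, hE, hF, hcc, hss]
    ring
  have hp : p = X^2 - C ((((1 + Real.cos (2*θ))/2 : ℝ):ℂ) + (((1 - Real.cos (2*θ))/2 : ℝ):ℂ)) * X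
      + C ((((1 + Real.cos (2*θ))/2 : ℝ):ℂ) * (((1 - Real.cos (2*θ))/2 : ℝ):ℂ)) := factored_eq _ _
  refine ⟨?_, ?_, ?_⟩
  · rw [charpoly_fin_two', h100, h101, h110, h111, hp]
    exact congrArg₂ (fun t d : ℂ => X^2 - C t * X + C d) (by push_cast; ring) (by push_cast; ring)
  · rw [charpoly_fin_two', h200, h201, h210, h211, hp]
    exact congrArg₂ (fun t d : ℂ => X^2 - C t * X + C d) (by push_cast; linear_combination hcs)
      (by push_cast; rw [Complex.cos_two_mul]; linear_combination Complex.cos (θ:ℂ)^2 * hcs)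
  · rw [charpoly_fin_two', h300, h301, h310, h311, hp]
    exact congrArg₂ (fun t d : ℂ => X^2 - C t * X + C d) (by push_cast; ring) (by push_cast; ring)

end
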